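/- (Theorem 2, deterministic core: the unidirectional TMMSE combining satisfies the stationarity identity (40)) Let Λ_1,…,Λ_L and Π_1,…,Π_L be K×K complex matrices such that I_K − Π_l Λ_l is invertible for every l. Define S_l := (I_K − Π_l Λ_l)^{−1}(I_K − Π_l) and S̄_l := I_K − Λ_l S_l. Then for every l ∈ {1,…,L}: (S_l + Π_l S̄_l) ∏_{s=1}^{l−1} S̄_s + Σ_{j=1}^{l−1} Λ_j S_j ∏_{s=1}^{j−1} S̄_s = I_K. -/

import Mathlib

/-!
(Theorem 2, deterministic core: the unidirectional TMMSE combining satisfies the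
stationarity identity (40)) Let Λ_1,…,Λ_L and Π_1,…,Π_L be K×K complex matrices such that
I_K − Π_l Λ_l is invertible for every l. Define S_l := (I_K − Π_l Λ_l)⁻¹ (I_K − Π_l) and
S̄_l := I_K − Λ_l S_l. Then for every l ∈ {1,…,L}:
(S_l + Π_l S̄_l) ∏_{s=1}^{l−1} S̄_s + Σ_{j=1}^{l−1} Λ_j S_j ∏_{s=1}^{j−1} S̄_s = I_K,
where ∏_{s=a}^{b} X_s denotes the ordered product X_b X_{b−1} ⋯ X_a (equal to I_K if b < a).
-/

/-- Ordered matrix product `∏_{s=a}^{b} X_s = X b * X (b-1) * ⋯ * X a`,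
equal to the identity when `b < a`. -/
noncomputable def ordProd {K : ℕ} (X : ℕ → Matrix (Fin K) (Fin K) ℂ) (a : ℕ) :
    ℕ → Matrix (Fin K) (Fin K) ℂ
  | 0 => if a = 0 then X 0 else 1
  | b + 1 => if b + 1 < a then 1 else X (b + 1) * ordProd X a b

theorem stmt_6 (K L : ℕ) (hK : 0 < K)
    (Λ Pmat : ℕ → Matrix (Fin K) (Fin K) ℂ)
    (hinv : ∀ l ∈ Finset.Icc 1 L, IsUnit (1 - Pmat l * Λ l))
    (S Sbar : ℕ → Matrix (Fin K) (Fin K) ℂ)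
    (hS : ∀ l ∈ Finset.Icc 1 L, S l = (1 - Pmat l * Λ l)⁻¹ * (1 - Pmat l))
    (hSbar : ∀ l ∈ Finset.Icc 1 L, Sbar l = 1 - Λ l * S l) :
    ∀ l ∈ Finset.Icc 1 L,
      (S l + Pmat l * Sbar l) * ordProd Sbar 1 (l - 1)
        + ∑ j ∈ Finset.Icc 1 (l - 1), Λ j * S j * ordProd Sbar 1 (j - 1) = 1 := by
  -- key fact: (1 - Pmat l * Λ l) * S l = 1 - Pmat l
  have hkey : ∀ l ∈ Finset.Icc 1 L, (1 - Pmat l * Λ l) * S l = 1 - Pmat l := by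
    intro l hl
    rw [hS l hl, ← Matrix.mul_assoc,
      Matrix.mul_nonsing_inv _ ((Matrix.isUnit_iff_isUnit_det _).mp (hinv l hl)),
      Matrix.one_mul]
  have hSP : ∀ l ∈ Finset.Icc 1 L, S l + Pmat l * Sbar l = 1 := by
    intro l hl
    have h := hkey l hl
    rw [hSbar l hl]
    have : S l + Pmat l * (1 - Λ l * S l)
        = (1 - Pmat l * Λ l) * S l + Pmat l := by noncomm_ring
    rw [this, h]; noncomm_ring
  -- telescoping: for all m with m ≤ L-1 i.e. each j ≤ m is ≤ L,
  have htel : ∀ m : ℕ, m ≤ L →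
      ordProd Sbar 1 m + ∑ j ∈ Finset.Icc 1 m, Λ j * S j * ordProd Sbar 1 (j - 1) = 1 := by
    intro m
    induction m with
    | zero =>
      intro _
      simp [ordProd]
    | succ n ih =>
      intro hn
      have hn' : n ≤ L := Nat.le_of_succ_le hn
      have hmem : n + 1 ∈ Finset.Icc 1 L := Finset.mem_Icc.mpr ⟨Nat.succ_le_succ (Nat.zero_le n), hn⟩
      have hord : ordProd Sbar 1 (n + 1) = Sbar (n + 1) * ordProd Sbar 1 n := by
        simp [ordProd]
      rw [Finset.sum_Icc_succ_top (Nat.succ_le_succ (Nat.zero_le n)), hord]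
      have hsum := ih hn'
      have hsb := hSbar (n + 1) hmem
      have : Λ (n + 1) * S (n + 1) = 1 - Sbar (n + 1) := by rw [hsb]; noncomm_ring
      rw [this]
      simp only [Nat.add_sub_cancel]
      calc Sbar (n + 1) * ordProd Sbar 1 n
            + (∑ j ∈ Finset.Icc 1 n, Λ j * S j * ordProd Sbar 1 (j - 1)
              + (1 - Sbar (n + 1)) * ordProd Sbar 1 n)
          = ordProd Sbar 1 n + ∑ j ∈ Finset.Icc 1 n, Λ j * S j * ordProd Sbar 1 (j - 1) := by noncomm_ring
        _ = 1 := hsum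
  intro l hl
  have hl' := Finset.mem_Icc.mp hl
  rw [hSP l hl, Matrix.one_mul]
  exact htel (l - 1) (le_trans (Nat.sub_le l 1) hl'.2)
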